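/- arXiv:2306.12508 — 7 statements merged into one kernel-verified Lean document; each statement's English description precedes it below -/
import Mathlib

section
/- Given two logical zonotopes L1 = ⟨c1, G1⟩ with γ1 generators and L2 = ⟨c2, G2⟩ with γ2 generators in (ZMod 2)^n, the Minkowski XOR L1 ⊕ L2 = { z1 + z2 | z1 ∈ L1, z2 ∈ L2 } is exactly equal to the logical zonotope with center c1 + c2 and generator matrix the concatenation [G1, G2] (i.e., generators g_{1,1},...,g_{1,γ1}, g_{2,1},...,g_{2,γ2}). -/
/-- A logical zonotope with center `c` and generators `g` (indexed by `ι`) over `(ZMod 2)^n`. -/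
def LogicalZonotope {n : ℕ} {ι : Type} [Fintype ι] (c : Fin n → ZMod 2)
    (g : ι → Fin n → ZMod 2) : Set (Fin n → ZMod 2) :=
  {x | ∃ β : ι → ZMod 2, x = c + ∑ i, β i • g i}

/-- Minkowski XOR of two logical zonotopes equals the logical zonotope with center
`c1 + c2` and concatenated generators. -/
theorem minkowski_xor_eq {n γ1 γ2 : ℕ} (c1 c2 : Fin n → ZMod 2)
    (g1 : Fin γ1 → Fin n → ZMod 2) (g2 : Fin γ2 → Fin n → ZMod 2) :
    {z | ∃ z1 ∈ LogicalZonotope c1 g1, ∃ z2 ∈ LogicalZonotope c2 g2, z = z1 + z2}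
      = LogicalZonotope (c1 + c2) (Sum.elim g1 g2) := by
  ext z
  simp only [Set.mem_setOf_eq, LogicalZonotope]
  constructor
  · rintro ⟨z1, ⟨β1, rfl⟩, z2, ⟨β2, rfl⟩, rfl⟩
    exact ⟨Sum.elim β1 β2, by simp [Fintype.sum_sum_type]; abel⟩
  · rintro ⟨β, rfl⟩
    refine ⟨_, ⟨β ∘ Sum.inl, rfl⟩, _, ⟨β ∘ Sum.inr, rfl⟩, ?_⟩
    simp [Fintype.sum_sum_type]; abel
end

section
/- Given two logical zonotopes L1 = ⟨c1, G1⟩ and L2 = ⟨c2, G2⟩ in (ZMod 2)^n, the Minkowski XNOR, defined as { ¬(z1 + z2) | z1 ∈ L1, z2 ∈ L2 } (where ¬v = v + 1_n), is exactly the logical zonotope with center c1 + c2 + 1_n and generator list the concatenation of the generators of L1 and L2. -/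
/-- Minkowski XNOR of two logical zonotopes equals the logical zonotope with center
`c1 + c2 + 1` (the all-ones vector added) and concatenated generators. -/
theorem minkowski_xnor_eq {n γ1 γ2 : ℕ} (c1 c2 : Fin n → ZMod 2)
    (g1 : Fin γ1 → Fin n → ZMod 2) (g2 : Fin γ2 → Fin n → ZMod 2) :
    {x | ∃ z1 ∈ LogicalZonotope c1 g1, ∃ z2 ∈ LogicalZonotope c2 g2, x = z1 + z2 + 1}
      = LogicalZonotope (c1 + c2 + 1) (Sum.elim g1 g2) := by
  ext x
  simp only [Set.mem_setOf_eq, LogicalZonotope]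
  constructor
  · rintro ⟨z1, ⟨β1, rfl⟩, z2, ⟨β2, rfl⟩, rfl⟩
    refine ⟨Sum.elim β1 β2, ?_⟩
    rw [Fintype.sum_sum_type]
    simp only [Sum.elim_inl, Sum.elim_inr]
    abel
  · rintro ⟨β, rfl⟩
    refine ⟨c1 + ∑ i, β (Sum.inl i) • g1 i, ⟨_, rfl⟩,
      c2 + ∑ i, β (Sum.inr i) • g2 i, ⟨_, rfl⟩, ?_⟩
    rw [Fintype.sum_sum_type]
    simp only [Sum.elim_inl, Sum.elim_inr]
    abel
end

section
/- Given two logical zonotopes L1 = ⟨c1, G1⟩ (with γ1 generators) and L2 = ⟨c2, G2⟩ (with γ2 generators) in (ZMod 2)^n, the Minkowski AND L1 ∧ L2 = { z1 * z2 | z1 ∈ L1, z2 ∈ L2 } (componentwise multiplication) is contained in the logical zonotope with center c1 * c2 and generators given by the list: c1 * g_{2,j} for all j, c2 * g_{1,i} for all i, and g_{1,i} * g_{2,j} for all pairs (i,j), where * denotes componentwise product. -/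
/-- Minkowski AND over-approximation: the componentwise product set of two logical
zonotopes is contained in the zonotope with center `c1 * c2` and generators
`c1 * g2 j`, `c2 * g1 i`, and `g1 i * g2 j`. -/
theorem minkowski_and_subset {n γ1 γ2 : ℕ} (c1 c2 : Fin n → ZMod 2)
    (g1 : Fin γ1 → Fin n → ZMod 2) (g2 : Fin γ2 → Fin n → ZMod 2) :
    {x | ∃ z1 ∈ LogicalZonotope c1 g1, ∃ z2 ∈ LogicalZonotope c2 g2, x = z1 * z2}
      ⊆ LogicalZonotope (c1 * c2)
          (Sum.elim (fun j => c1 * g2 j)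
            (Sum.elim (fun i => c2 * g1 i)
              (fun p : Fin γ1 × Fin γ2 => g1 p.1 * g2 p.2))) := by
  rintro x ⟨z1, ⟨β1, h1⟩, z2, ⟨β2, h2⟩, hx⟩
  refine ⟨Sum.elim β2 (Sum.elim β1 fun p => β1 p.1 * β2 p.2), ?_⟩
  subst h1 h2 hx
  funext k
  simp only [Fintype.sum_sum_type, Fintype.sum_prod_type, Finset.sum_apply,
    Pi.add_apply, Pi.mul_apply, Pi.smul_apply, smul_eq_mul, Sum.elim_inl,
    Sum.elim_inr, add_mul, mul_add, Finset.mul_sum, Finset.sum_mul,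
    Finset.sum_add_distrib, mul_comm, mul_left_comm, mul_assoc]
  rw [Finset.sum_comm]
  ring
end

section
/- Define a polynomial logical zonotope P = ⟨c, G, E⟩ over (ZMod 2)^n as the set { c + ⊕_{i=1}^{h} (∏_{k=1}^{p} α_k^{E(k,i)}) • g_i | α ∈ (ZMod 2)^p }, where E ∈ (ZMod 2)^{p×h} is the exponent matrix and α_k^0 = 1, α_k^1 = α_k. Then for two polynomial logical zonotopes P1 = ⟨c1, G1, E1⟩ (with p1 factors, h1 generators) and P2 = ⟨c2, G2, E2⟩ (with p2 factors, h2 generators), the Minkowski XOR { z1 + z2 | z1 ∈ P1, z2 ∈ P2 } equals the polynomial logical zonotope with center c1 + c2, generator list the concatenation [G1, G2], and exponent matrix the block-diagonal matrix [[E1, 0],[0, E2]] over p1 + p2 factors. -/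
/-- A polynomial logical zonotope with center `c`, dependent generators `g` (indexed
by `ι`), and exponent matrix `E` over dependent factors indexed by `κ`. -/
def PolyLogicalZonotope {n : ℕ} {κ ι : Type} [Fintype κ] [Fintype ι]
    (c : Fin n → ZMod 2) (g : ι → Fin n → ZMod 2) (E : κ → ι → ZMod 2) :
    Set (Fin n → ZMod 2) :=
  {x | ∃ α : κ → ZMod 2, x = c + ∑ i, (∏ k, α k ^ (E k i).val) • g i}

/-- Minkowski XOR of two polynomial logical zonotopes equals the polynomial logical
zonotope with center `c1 + c2`, concatenated generators and block-diagonal exponent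
matrix. -/
theorem poly_minkowski_xor_eq {n p1 p2 h1 h2 : ℕ}
    (c1 c2 : Fin n → ZMod 2)
    (g1 : Fin h1 → Fin n → ZMod 2) (g2 : Fin h2 → Fin n → ZMod 2)
    (E1 : Fin p1 → Fin h1 → ZMod 2) (E2 : Fin p2 → Fin h2 → ZMod 2) :
    {z | ∃ z1 ∈ PolyLogicalZonotope c1 g1 E1, ∃ z2 ∈ PolyLogicalZonotope c2 g2 E2,
        z = z1 + z2}
      = PolyLogicalZonotope (c1 + c2) (Sum.elim g1 g2)
          (fun k i => match k, i with
            | Sum.inl k, Sum.inl i => E1 k i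
            | Sum.inr k, Sum.inr i => E2 k i
            | _, _ => 0) := by
  ext z
  simp only [Set.mem_setOf_eq, PolyLogicalZonotope]
  constructor
  · rintro ⟨z1, ⟨α1, rfl⟩, z2, ⟨α2, rfl⟩, rfl⟩
    refine ⟨Sum.elim α1 α2, ?_⟩
    rw [Fintype.sum_sum_type]
    simp only [Fintype.prod_sum_type, Sum.elim_inl, Sum.elim_inr, ZMod.val_zero,
      pow_zero, Finset.prod_const_one, mul_one, one_mul]
    abel
  · rintro ⟨α, rfl⟩
    refine ⟨_, ⟨fun k => α (Sum.inl k), rfl⟩, _, ⟨fun k => α (Sum.inr k), rfl⟩, ?_⟩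
    rw [Fintype.sum_sum_type]
    simp only [Fintype.prod_sum_type, Sum.elim_inl, Sum.elim_inr, ZMod.val_zero,
      pow_zero, Finset.prod_const_one, mul_one, one_mul]
    abel
end

section
/- For two polynomial logical zonotopes P1 = ⟨c1, G1, E1⟩ (with independent factors α ∈ (ZMod 2)^{p1}) and P2 = ⟨c2, G2, E2⟩ (with independent factors α' ∈ (ZMod 2)^{p2}), the Minkowski AND { z1 * z2 | z1 ∈ P1, z2 ∈ P2 } (componentwise product) is exactly equal to the polynomial logical zonotope over p1 + p2 factors with center c1 * c2, generators [c1*g_{2,1},...,c1*g_{2,h2}, c2*g_{1,1},...,c2*g_{1,h1}, g_{1,1}*g_{2,1}, ..., g_{1,h1}*g_{2,h2}], and exponent matrix whose columns are: [0; E2(·,j)] for each j, [E1(·,i); 0] for each i, and [E1(·,i); E2(·,j)] for each pair (i,j). -/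
private lemma aux_key {n p1 p2 h1 h2 : ℕ}
    (c1 c2 : Fin n → ZMod 2)
    (g1 : Fin h1 → Fin n → ZMod 2) (g2 : Fin h2 → Fin n → ZMod 2)
    (E1 : Fin p1 → Fin h1 → ZMod 2) (E2 : Fin p2 → Fin h2 → ZMod 2)
    (α : (Fin p1 ⊕ Fin p2) → ZMod 2) :
    (c1 + ∑ i, (∏ k, α (Sum.inl k) ^ (E1 k i).val) • g1 i) *
      (c2 + ∑ j, (∏ k, α (Sum.inr k) ^ (E2 k j).val) • g2 j)
    = c1 * c2 + ∑ s, (∏ k, α k ^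
          ((Sum.elim
              (fun j : Fin h2 => Sum.elim (fun _ => (0 : ZMod 2)) (fun k2 => E2 k2 j) k)
              (Sum.elim
                (fun i : Fin h1 => Sum.elim (fun k1 => E1 k1 i) (fun _ => (0 : ZMod 2)) k)
                (fun q : Fin h1 × Fin h2 =>
                  Sum.elim (fun k1 => E1 k1 q.1) (fun k2 => E2 k2 q.2) k)) s).val)) •
        (Sum.elim (fun j => c1 * g2 j)
            (Sum.elim (fun i => c2 * g1 i)
              (fun q : Fin h1 × Fin h2 => g1 q.1 * g2 q.2)) s) := by
  rw [Fintype.sum_sum_type, Fintype.sum_sum_type, Fintype.sum_prod_type]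
  simp only [Sum.elim_inl, Sum.elim_inr, Fintype.prod_sum_type, ZMod.val_zero, pow_zero,
    Finset.prod_const_one, one_mul, mul_one]
  rw [add_mul, mul_add, mul_add, Finset.sum_mul, Finset.mul_sum, Finset.sum_mul]
  simp only [mul_smul_comm, smul_mul_assoc, Finset.mul_sum, smul_smul]


  abel_nf
  refine congrArg₂ _ rfl (congrArg₂ _ rfl (congrArg₂ _ ?_ ?_))
  · exact Finset.sum_congr rfl fun i _ => by rw [mul_comm (g1 i) c2]
  · exact Finset.sum_congr rfl fun i _ => Finset.sum_congr rfl fun j _ => by rw [mul_comm]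

/-- Minkowski AND of two polynomial logical zonotopes (independent factors) is exactly
the polynomial logical zonotope with center `c1 * c2`, generators
`c1 * g2 j`, `c2 * g1 i`, `g1 i * g2 j`, and exponent columns `[0; E2(·,j)]`,
`[E1(·,i); 0]`, `[E1(·,i); E2(·,j)]` over `p1 + p2` factors. -/
theorem poly_minkowski_and_eq {n p1 p2 h1 h2 : ℕ}
    (c1 c2 : Fin n → ZMod 2)
    (g1 : Fin h1 → Fin n → ZMod 2) (g2 : Fin h2 → Fin n → ZMod 2)
    (E1 : Fin p1 → Fin h1 → ZMod 2) (E2 : Fin p2 → Fin h2 → ZMod 2) :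
    {z | ∃ z1 ∈ PolyLogicalZonotope c1 g1 E1, ∃ z2 ∈ PolyLogicalZonotope c2 g2 E2,
        z = z1 * z2}
      = PolyLogicalZonotope (c1 * c2)
          (Sum.elim (fun j => c1 * g2 j)
            (Sum.elim (fun i => c2 * g1 i)
              (fun q : Fin h1 × Fin h2 => g1 q.1 * g2 q.2)))
          (fun k : Fin p1 ⊕ Fin p2 =>
            Sum.elim
              (fun j : Fin h2 => Sum.elim (fun _ => (0 : ZMod 2)) (fun k2 => E2 k2 j) k)
              (Sum.elim
                (fun i : Fin h1 => Sum.elim (fun k1 => E1 k1 i) (fun _ => (0 : ZMod 2)) k)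
                (fun q : Fin h1 × Fin h2 =>
                  Sum.elim (fun k1 => E1 k1 q.1) (fun k2 => E2 k2 q.2) k))) := by
  ext z
  simp only [PolyLogicalZonotope, Set.mem_setOf_eq]
  constructor
  · rintro ⟨z1, ⟨α1, rfl⟩, z2, ⟨α2, rfl⟩, rfl⟩
    exact ⟨Sum.elim α1 α2, aux_key c1 c2 g1 g2 E1 E2 (Sum.elim α1 α2)⟩
  · rintro ⟨α, rfl⟩
    exact ⟨_, ⟨fun k => α (Sum.inl k), rfl⟩, _, ⟨fun k => α (Sum.inr k), rfl⟩,
      (aux_key c1 c2 g1 g2 E1 E2 α).symm⟩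
end

section
/- Exact XOR of polynomial logical zonotopes sharing factors: for P1 = ⟨c1, G1, E1⟩ and P2 = ⟨c2, G2, E2⟩ both with exponent matrices over the same p common dependent factors α ∈ (ZMod 2)^p, the dependent XOR set { (c1 + Σ_i m_i(α) g_{1,i}) + (c2 + Σ_j m'_j(α) g_{2,j}) | α ∈ (ZMod 2)^p } (with the same α used in both) equals the polynomial logical zonotope ⟨c1 + c2, [G1, G2], [E1, E2]⟩ obtained by concatenating the generators and concatenating the exponent matrices horizontally. -/
/-- Exact XOR of two polynomial logical zonotopes sharing the same `p` dependent
factors: the XOR with a shared factor vector `α` equals the polynomial logical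
zonotope with center `c1 + c2`, concatenated generators and horizontally
concatenated exponent matrices. -/
theorem poly_exact_xor_eq {n p h1 h2 : ℕ}
    (c1 c2 : Fin n → ZMod 2)
    (g1 : Fin h1 → Fin n → ZMod 2) (g2 : Fin h2 → Fin n → ZMod 2)
    (E1 : Fin p → Fin h1 → ZMod 2) (E2 : Fin p → Fin h2 → ZMod 2) :
    {z | ∃ α : Fin p → ZMod 2,
        z = (c1 + ∑ i, (∏ k, α k ^ (E1 k i).val) • g1 i)
          + (c2 + ∑ j, (∏ k, α k ^ (E2 k j).val) • g2 j)}
      = PolyLogicalZonotope (c1 + c2) (Sum.elim g1 g2)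
          (fun k => Sum.elim (E1 k) (E2 k)) := by
  ext z
  simp only [PolyLogicalZonotope, Set.mem_setOf_eq]
  constructor <;> rintro ⟨α, rfl⟩ <;> refine ⟨α, ?_⟩ <;>
    simp [Fintype.sum_sum_type, add_assoc, add_left_comm]
end

section
/- Exact AND of polynomial logical zonotopes sharing factors: with P1 = ⟨c1, G1, E1⟩ and P2 = ⟨c2, G2, E2⟩ over the same p dependent factors, the dependent AND set { z1(α) * z2(α) | α ∈ (ZMod 2)^p } (componentwise product, same α in both) equals the polynomial logical zonotope with center c1*c2, generators [c1*g_{2,j} for all j, c2*g_{1,i} for all i, g_{1,i}*g_{2,j} for all (i,j)], and exponent matrix with columns [E2(·,j) for all j, E1(·,i) for all i, max(E1(·,i), E2(·,j)) componentwise for all (i,j)]. -/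
/-- Pointwise maximum of two binary entries of `ZMod 2` (their supremum as bits). -/
def zmax (a b : ZMod 2) : ZMod 2 := if a.val ≤ b.val then b else a

lemma pow_zmax (a e1 e2 : ZMod 2) :
    a ^ (e1.val) * a ^ (e2.val) = a ^ ((zmax e1 e2).val) := by
  revert a e1 e2; decide

/-- Exact AND of two polynomial logical zonotopes sharing the same `p` dependent
factors: the componentwise product with a shared factor vector `α` equals the
polynomial logical zonotope with center `c1 * c2`, generators `c1 * g2 j`,
`c2 * g1 i`, `g1 i * g2 j`, and exponent columns `E2(·,j)`, `E1(·,i)`, and the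
componentwise maximum `max(E1(·,i), E2(·,j))`. -/
theorem poly_exact_and_eq {n p h1 h2 : ℕ}
    (c1 c2 : Fin n → ZMod 2)
    (g1 : Fin h1 → Fin n → ZMod 2) (g2 : Fin h2 → Fin n → ZMod 2)
    (E1 : Fin p → Fin h1 → ZMod 2) (E2 : Fin p → Fin h2 → ZMod 2) :
    {z | ∃ α : Fin p → ZMod 2,
        z = (c1 + ∑ i, (∏ k, α k ^ (E1 k i).val) • g1 i)
          * (c2 + ∑ j, (∏ k, α k ^ (E2 k j).val) • g2 j)}
      = PolyLogicalZonotope (c1 * c2)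
          (Sum.elim (fun j => c1 * g2 j)
            (Sum.elim (fun i => c2 * g1 i)
              (fun q : Fin h1 × Fin h2 => g1 q.1 * g2 q.2)))
          (fun k =>
            Sum.elim (fun j : Fin h2 => E2 k j)
              (Sum.elim (fun i : Fin h1 => E1 k i)
                (fun q : Fin h1 × Fin h2 => zmax (E1 k q.1) (E2 k q.2)))) := by
  have key : ∀ α : Fin p → ZMod 2,
      (c1 + ∑ i, (∏ k, α k ^ (E1 k i).val) • g1 i)
        * (c2 + ∑ j, (∏ k, α k ^ (E2 k j).val) • g2 j)
      = c1 * c2 + ∑ i, (∏ k, α k ^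
          ((Sum.elim (fun j : Fin h2 => E2 k j)
            (Sum.elim (fun i : Fin h1 => E1 k i)
              (fun q : Fin h1 × Fin h2 => zmax (E1 k q.1) (E2 k q.2)))) i).val) •
          (Sum.elim (fun j => c1 * g2 j)
            (Sum.elim (fun i => c2 * g1 i)
              (fun q : Fin h1 × Fin h2 => g1 q.1 * g2 q.2))) i := by
    intro α
    rw [Fintype.sum_sum_type, Fintype.sum_sum_type, Fintype.sum_prod_type]
    simp only [Sum.elim_inl, Sum.elim_inr]
    rw [add_mul, mul_add, mul_add, Finset.mul_sum, Finset.sum_mul]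
    have h3 : ∀ i : Fin h1, ((∏ k, α k ^ (E1 k i).val) • g1 i) * c2
        = (∏ k, α k ^ (E1 k i).val) • (c2 * g1 i) := by
      intro i; rw [smul_mul_assoc, mul_comm]
    have h4 : (∑ i, (∏ k, α k ^ (E1 k i).val) • g1 i)
        * (∑ j, (∏ k, α k ^ (E2 k j).val) • g2 j)
        = ∑ i, ∑ j, (∏ k, α k ^ ((zmax (E1 k i) (E2 k j)).val)) • (g1 i * g2 j) := by
      rw [Finset.sum_mul]
      refine Finset.sum_congr rfl fun i _ => ?_
      rw [Finset.mul_sum]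
      refine Finset.sum_congr rfl fun j _ => ?_
      rw [smul_mul_smul_comm, ← Finset.prod_mul_distrib]
      congr 1
      exact Finset.prod_congr rfl fun k _ => pow_zmax (α k) (E1 k i) (E2 k j)
    simp only [mul_smul_comm, h3, h4]
    abel
  ext z
  simp only [Set.mem_setOf_eq, PolyLogicalZonotope]
  constructor
  · rintro ⟨α, rfl⟩; exact ⟨α, key α⟩
  · rintro ⟨α, rfl⟩; exact ⟨α, (key α).symm⟩
end
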